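/- For any formal power series h(z) = z + Σ_{n≥m} hₙ zⁿ with m ≥ 2 and h_m ≠ 0 over a field of characteristic 0, and any scalar t, there exists a unique formal power series F(z) = z + Σ_{n≥m} Fₙ zⁿ with F_m = t·h_m and F ∘ h = h ∘ F. -/

import Mathlib

open PowerSeries

/-- Composition `g ∘ f` of formal power series (intended for `f` with zero constant term):
the `n`-th coefficient is `∑_{k ≤ n} g_k · (f^k)_n`. -/
noncomputable def PowerSeries.comp' {K : Type*} [CommRing K]
    (g f : PowerSeries K) : PowerSeries K :=
  PowerSeries.mk fun n => ∑ k ∈ Finset.range (n + 1), (coeff k g) * coeff n (f ^ k)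

namespace RegIterAux

variable {K : Type*} [CommRing K]

lemma pow_order (f : PowerSeries K) (hf0 : coeff 0 f = 0) :
    ∀ k N, N < k → coeff N (f ^ k) = 0 := by
  intro k
  induction k with
  | zero => intro N hN; exact absurd hN (Nat.not_lt_zero N)
  | succ k ih =>
    intro N hN
    rw [pow_succ', coeff_mul]
    apply Finset.sum_eq_zero
    rintro ⟨p, q⟩ hpq
    rw [Finset.HasAntidiagonal.mem_antidiagonal] at hpq
    rcases Nat.eq_zero_or_pos p with rfl | hp
    · simp only at hpq ⊢; rw [hf0, zero_mul]
    · rw [ih q (by omega), mul_zero]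

lemma pow_diag (f : PowerSeries K) (hf0 : coeff 0 f = 0) (hf1 : coeff 1 f = 1) :
    ∀ k, coeff k (f ^ k) = 1 := by
  intro k
  induction k with
  | zero => simp
  | succ k ih =>
    rw [pow_succ', coeff_mul]
    rw [Finset.sum_eq_single (1, k)]
    · rw [hf1, ih, one_mul]
    · rintro ⟨p, q⟩ hpq hne
      rw [Finset.HasAntidiagonal.mem_antidiagonal] at hpq
      simp only at hpq ⊢
      rcases Nat.eq_zero_or_pos p with rfl | hp
      · rw [hf0, zero_mul]
      · have hq : q < k := by
          rcases Nat.lt_or_ge q k with hq | hq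
          · exact hq
          · exfalso; apply hne
            have hp1 : p = 1 := by omega
            have hq1 : q = k := by omega
            rw [hp1, hq1]
        rw [pow_order f hf0 k q hq, mul_zero]
    · intro hmem
      exfalso; apply hmem
      rw [Finset.HasAntidiagonal.mem_antidiagonal]
      omega

lemma pow_gap (m : ℕ) (f : PowerSeries K) (hf0 : coeff 0 f = 0)
    (hfmid : ∀ j, 1 < j → j < m → coeff j f = 0) :
    ∀ k N, k < N → N + 1 < k + m → coeff N (f ^ k) = 0 := by
  intro k
  induction k with
  | zero =>
    intro N h1 _
    rw [pow_zero, coeff_one, if_neg (by omega)]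
  | succ k ih =>
    intro N h1 h2
    rw [pow_succ', coeff_mul]
    apply Finset.sum_eq_zero
    rintro ⟨p, q⟩ hpq
    rw [Finset.HasAntidiagonal.mem_antidiagonal] at hpq
    simp only at hpq ⊢
    rcases Nat.eq_zero_or_pos p with rfl | hp
    · rw [hf0, zero_mul]
    rcases Nat.eq_or_lt_of_le hp with hp1 | hp2
    · have hq : q = N - 1 := by omega
      rw [ih q (by omega) (by omega), mul_zero]
    rcases Nat.lt_or_ge p m with hpm | hpm
    · rw [hfmid p (by omega) hpm, zero_mul]
    · rw [pow_order f hf0 k q (by omega), mul_zero]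

lemma pow_top (m : ℕ) (hm : 2 ≤ m) (f : PowerSeries K) (hf0 : coeff 0 f = 0)
    (hf1 : coeff 1 f = 1) (hfmid : ∀ j, 1 < j → j < m → coeff j f = 0) :
    ∀ k, coeff (k + m - 1) (f ^ k) = (k : K) * coeff m f := by
  intro k
  induction k with
  | zero =>
    rw [pow_zero, coeff_one, if_neg (by omega)]
    simp
  | succ k ih =>
    have hidx : k + 1 + m - 1 = k + m := by omega
    rw [hidx, pow_succ', coeff_mul]
    have hsub : ({(1, k + m - 1), (m, k)} : Finset (ℕ × ℕ)) ⊆ Finset.HasAntidiagonal.antidiagonal (k + m) := by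
      intro x hx
      simp only [Finset.mem_insert, Finset.mem_singleton] at hx
      rcases hx with rfl | rfl <;> rw [Finset.HasAntidiagonal.mem_antidiagonal] <;> omega
    rw [← Finset.sum_subset hsub ?_]
    · have hne : ((1:ℕ), k + m - 1) ≠ (m, k) := by
        intro hEq; rw [Prod.mk.injEq] at hEq; omega
      rw [Finset.sum_pair hne]
      rw [hf1, one_mul, ih, pow_diag f hf0 hf1, mul_one]
      push_cast; ring
    · rintro ⟨p, q⟩ hpq hnot
      rw [Finset.HasAntidiagonal.mem_antidiagonal] at hpq
      simp only [Finset.mem_insert, Finset.mem_singleton, Prod.mk.injEq, not_or, not_and] at hnot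
      obtain ⟨hn1, hn2⟩ := hnot
      simp only at hpq ⊢
      rcases Nat.eq_zero_or_pos p with rfl | hp
      · rw [hf0, zero_mul]
      rcases Nat.eq_or_lt_of_le hp with hp1 | hp2
      · exfalso; exact hn1 hp1.symm (by omega)
      rcases Nat.lt_or_ge p m with hpm | hpm
      · rw [hfmid p (by omega) hpm, zero_mul]
      rcases Nat.eq_or_lt_of_le hpm with hpm1 | hpm2
      · exfalso; exact hn2 hpm1.symm (by omega)
      · rw [pow_order f hf0 k q (by omega), mul_zero]

lemma pow_agree (f g : PowerSeries K) (hf0 : coeff 0 f = 0) (hg0 : coeff 0 g = 0)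
    (n : ℕ) (hag : ∀ j, j < n → coeff j f = coeff j g) :
    ∀ k N, N + 1 < n + k → coeff N (f ^ k) = coeff N (g ^ k) := by
  intro k
  induction k with
  | zero => intro N _; rfl
  | succ k ih =>
    intro N hN
    rw [pow_succ', pow_succ', coeff_mul, coeff_mul]
    apply Finset.sum_congr rfl
    rintro ⟨p, q⟩ hpq
    rw [Finset.HasAntidiagonal.mem_antidiagonal] at hpq
    simp only at hpq ⊢
    rcases Nat.lt_or_ge p n with hp | hp
    · rcases Nat.eq_zero_or_pos p with rfl | hp1
      · rw [hf0, hg0, zero_mul, zero_mul]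
      · rw [hag p hp, ih q (by omega)]
    · rw [pow_order f hf0 k q (by omega), pow_order g hg0 k q (by omega),
        mul_zero, mul_zero]

lemma pow_lead (f g : PowerSeries K) (hf0 : coeff 0 f = 0) (hf1 : coeff 1 f = 1)
    (hg0 : coeff 0 g = 0) (hg1 : coeff 1 g = 1) (n : ℕ) (hn : 2 ≤ n)
    (hag : ∀ j, j < n → coeff j f = coeff j g) :
    ∀ k, coeff (n + k - 1) (f ^ k) - coeff (n + k - 1) (g ^ k)
      = (k : K) * (coeff n f - coeff n g) := by
  intro k
  induction k with
  | zero => simp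
  | succ k ih =>
    have hidx : n + (k + 1) - 1 = n + k := by omega
    rw [hidx, pow_succ', pow_succ', coeff_mul, coeff_mul, ← Finset.sum_sub_distrib]
    have hsub : ({(1, n + k - 1), (n, k)} : Finset (ℕ × ℕ)) ⊆ Finset.HasAntidiagonal.antidiagonal (n + k) := by
      intro x hx
      simp only [Finset.mem_insert, Finset.mem_singleton] at hx
      rcases hx with rfl | rfl <;> rw [Finset.HasAntidiagonal.mem_antidiagonal] <;> omega
    rw [← Finset.sum_subset hsub ?_]
    · have hne : ((1:ℕ), n + k - 1) ≠ (n, k) := by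
        intro hEq; rw [Prod.mk.injEq] at hEq; omega
      rw [Finset.sum_pair hne]
      simp only
      rw [hf1, hg1, one_mul, one_mul, ih, pow_diag f hf0 hf1, pow_diag g hg0 hg1,
        mul_one, mul_one]
      push_cast; ring
    · rintro ⟨p, q⟩ hpq hnot
      rw [Finset.HasAntidiagonal.mem_antidiagonal] at hpq
      simp only [Finset.mem_insert, Finset.mem_singleton, Prod.mk.injEq, not_or,
        not_and] at hnot
      obtain ⟨hn1, hn2⟩ := hnot
      simp only at hpq ⊢
      rcases Nat.eq_zero_or_pos p with rfl | hp
      · rw [hf0, hg0, zero_mul, zero_mul, sub_zero]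
      rcases Nat.eq_or_lt_of_le hp with hp1 | hp2
      · exfalso; exact hn1 hp1.symm (by omega)
      rcases Nat.lt_or_ge p n with hpn | hpn
      · rw [hag p hpn, pow_agree f g hf0 hg0 n hag k q (by omega), sub_self]
      rcases Nat.eq_or_lt_of_le hpn with hpn1 | hpn2
      · exfalso; exact hn2 hpn1.symm (by omega)
      · rw [pow_order f hf0 k q (by omega), pow_order g hg0 k q (by omega),
          mul_zero, mul_zero, sub_zero]

lemma low (m : ℕ) (hm : 2 ≤ m) (f h : PowerSeries K)
    (hf0 : coeff 0 f = 0) (hf1 : coeff 1 f = 1)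
    (hfmid : ∀ j, 1 < j → j < m → coeff j f = 0)
    (hh0 : coeff 0 h = 0) (hh1 : coeff 1 h = 1)
    (hhmid : ∀ j, 1 < j → j < m → coeff j h = 0)
    (N : ℕ) (hN : N < 2 * m) :
    coeff N (PowerSeries.comp' f h) = coeff N (PowerSeries.comp' h f) := by
  rw [PowerSeries.comp', PowerSeries.comp', coeff_mk, coeff_mk]
  rcases Nat.eq_zero_or_pos N with rfl | hN1
  · simp [hf0, hh0]
  rw [← sub_eq_zero, ← Finset.sum_sub_distrib]
  have hsub : ({1, N} : Finset ℕ) ⊆ Finset.range (N + 1) := by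
    intro x hx
    simp only [Finset.mem_insert, Finset.mem_singleton] at hx
    rcases hx with rfl | rfl <;> rw [Finset.mem_range] <;> omega
  rw [← Finset.sum_subset hsub ?_]
  · rcases Nat.eq_or_lt_of_le hN1 with h1 | h2
    · rw [← h1]
      norm_num [pow_one, hf1, hh1]
    · rw [Finset.sum_pair (by omega : (1:ℕ) ≠ N)]
      rw [pow_one, pow_one, hf1, hh1, pow_diag f hf0 hf1, pow_diag h hh0 hh1]
      ring
  · intro k hk hknot
    rw [Finset.mem_range] at hk
    simp only [Finset.mem_insert, Finset.mem_singleton, not_or] at hknot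
    obtain ⟨hk1, hkN⟩ := hknot
    rcases Nat.eq_zero_or_pos k with rfl | hkpos
    · rw [hf0, hh0, zero_mul, zero_mul, sub_zero]
    rcases Nat.lt_or_ge k m with hkm | hkm
    · rw [hfmid k (by omega) hkm, hhmid k (by omega) hkm, zero_mul, zero_mul, sub_zero]
    by_cases hbig : N + 1 < k + m
    · rw [pow_gap m h hh0 hhmid k N (by omega) hbig,
        pow_gap m f hf0 hfmid k N (by omega) hbig, mul_zero, mul_zero, sub_zero]
    · have hkm' : k = m := by omega
      have hNval : N = k + m - 1 := by omega
      rw [hNval, pow_top m hm h hh0 hh1 hhmid, pow_top m hm f hf0 hf1 hfmid, hkm']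
      ring

lemma diff (m n : ℕ) (hm : 2 ≤ m) (hmn : m < n) (f g h : PowerSeries K)
    (hf0 : coeff 0 f = 0) (hf1 : coeff 1 f = 1)
    (hfmid : ∀ j, 1 < j → j < m → coeff j f = 0)
    (hg0 : coeff 0 g = 0) (hg1 : coeff 1 g = 1)
    (hgmid : ∀ j, 1 < j → j < m → coeff j g = 0)
    (hh0 : coeff 0 h = 0) (hh1 : coeff 1 h = 1)
    (hhmid : ∀ j, 1 < j → j < m → coeff j h = 0)
    (hag : ∀ j, j < n → coeff j f = coeff j g) :
    (coeff (n + m - 1) (PowerSeries.comp' f h)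
        - coeff (n + m - 1) (PowerSeries.comp' h f))
      - (coeff (n + m - 1) (PowerSeries.comp' g h)
        - coeff (n + m - 1) (PowerSeries.comp' h g))
      = ((n : K) - (m : K)) * coeff m h * (coeff n f - coeff n g) := by
  set N := n + m - 1 with hNdef
  rw [PowerSeries.comp', PowerSeries.comp', PowerSeries.comp', PowerSeries.comp',
    coeff_mk, coeff_mk, coeff_mk, coeff_mk]
  have hA : (∑ k ∈ Finset.range (N + 1), coeff k f * coeff N (h ^ k))
      - ∑ k ∈ Finset.range (N + 1), coeff k g * coeff N (h ^ k)
      = (coeff n f - coeff n g) * ((n : K) * coeff m h)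
        + (coeff N f - coeff N g) := by
    rw [← Finset.sum_sub_distrib]
    have hsub : ({n, N} : Finset ℕ) ⊆ Finset.range (N + 1) := by
      intro x hx
      simp only [Finset.mem_insert, Finset.mem_singleton] at hx
      rcases hx with rfl | rfl <;> rw [Finset.mem_range] <;> omega
    rw [← Finset.sum_subset hsub ?_]
    · rw [Finset.sum_pair (by omega : n ≠ N)]
      rw [hNdef, pow_top m hm h hh0 hh1 hhmid n, pow_diag h hh0 hh1]
      ring
    · intro k hk hknot
      rw [Finset.mem_range] at hk
      simp only [Finset.mem_insert, Finset.mem_singleton, not_or] at hknot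
      obtain ⟨hk1, hkN⟩ := hknot
      rcases Nat.lt_or_ge k n with hkn | hkn
      · rw [hag k hkn, sub_self]
      · rw [pow_gap m h hh0 hhmid k N (by omega) (by omega), mul_zero, mul_zero, sub_zero]
  have hB : (∑ k ∈ Finset.range (N + 1), coeff k h * coeff N (f ^ k))
      - ∑ k ∈ Finset.range (N + 1), coeff k h * coeff N (g ^ k)
      = (coeff N f - coeff N g)
        + coeff m h * ((m : K) * (coeff n f - coeff n g)) := by
    rw [← Finset.sum_sub_distrib]
    have hsub : ({1, m} : Finset ℕ) ⊆ Finset.range (N + 1) := by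
      intro x hx
      simp only [Finset.mem_insert, Finset.mem_singleton] at hx
      rcases hx with rfl | rfl <;> rw [Finset.mem_range] <;> omega
    rw [← Finset.sum_subset hsub ?_]
    · rw [Finset.sum_pair (by omega : (1:ℕ) ≠ m)]
      have hlead := pow_lead f g hf0 hf1 hg0 hg1 n (by omega) hag m
      rw [pow_one, pow_one, hh1, one_mul, one_mul]
      rw [hNdef]
      linear_combination (coeff m h) * hlead
    · intro k hk hknot
      rw [Finset.mem_range] at hk
      simp only [Finset.mem_insert, Finset.mem_singleton, not_or] at hknot
      obtain ⟨hk1, hkm⟩ := hknot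
      rcases Nat.eq_zero_or_pos k with rfl | hkpos
      · rw [hh0, zero_mul, zero_mul, sub_zero]
      rcases Nat.lt_or_ge k m with hkmlt | hkmge
      · rw [hhmid k (by omega) hkmlt, zero_mul, zero_mul, sub_zero]
      · rw [pow_agree f g hf0 hg0 n hag k N (by omega), sub_self]
  linear_combination hA - hB

noncomputable def crec {K : Type*} [Field K] (m : ℕ) (h : PowerSeries K) (t : K) : ℕ → K
  | n =>
    if n = 0 then 0
    else if n = 1 then 1
    else if n < m then 0
    else if n = m then t * coeff m h
    else
      -((coeff (n + m - 1) (PowerSeries.comp'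
            (PowerSeries.mk fun j => if hj : j < n then crec m h t j else 0) h))
        - coeff (n + m - 1) (PowerSeries.comp' h
            (PowerSeries.mk fun j => if hj : j < n then crec m h t j else 0)))
        / (((n : K) - (m : K)) * coeff m h)
  termination_by n => n
  decreasing_by all_goals exact hj

variable {K : Type*} [Field K]

lemma crec_zero (m : ℕ) (h : PowerSeries K) (t : K) : crec m h t 0 = 0 := by
  rw [crec]; norm_num

lemma crec_one (m : ℕ) (h : PowerSeries K) (t : K) : crec m h t 1 = 1 := by
  rw [crec]; norm_num

lemma crec_mid (m : ℕ) (h : PowerSeries K) (t : K) (j : ℕ) (h1 : 1 < j) (h2 : j < m) :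
    crec m h t j = 0 := by
  rw [crec, if_neg (by omega), if_neg (by omega), if_pos h2]

lemma crec_m (m : ℕ) (hm : 2 ≤ m) (h : PowerSeries K) (t : K) :
    crec m h t m = t * coeff m h := by
  rw [crec, if_neg (by omega), if_neg (by omega), if_neg (by omega), if_pos rfl]

lemma crec_rec (m n : ℕ) (hm : 2 ≤ m) (h : PowerSeries K) (t : K) (hmn : m < n)
    (hK : ((n : K) - (m : K)) * coeff m h ≠ 0) :
    ((n : K) - (m : K)) * coeff m h * crec m h t n
      = -((coeff (n + m - 1) (PowerSeries.comp'
            (PowerSeries.mk fun j => if hj : j < n then crec m h t j else 0) h))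
        - coeff (n + m - 1) (PowerSeries.comp' h
            (PowerSeries.mk fun j => if hj : j < n then crec m h t j else 0))) := by
  conv_lhs => rw [crec]
  rw [if_neg (by omega), if_neg (by omega), if_neg (by omega), if_neg (by omega)]
  rw [mul_comm, div_mul_cancel₀ _ hK]

end RegIterAux

/-- For any formal power series `h z = z + ∑_{n ≥ m} hₙ zⁿ` with `m ≥ 2` and `h_m ≠ 0`
over a field of characteristic zero, and any scalar `t`, there exists a unique formal power
series `F z = z + ∑_{n ≥ m} Fₙ zⁿ` with `F_m = t · h_m` and `F ∘ h = h ∘ F`. -/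
theorem regular_iterate_exists_unique {K : Type*} [Field K] [CharZero K]
    (m : ℕ) (hm : 2 ≤ m) (h : PowerSeries K)
    (h0 : coeff 0 h = 0) (h1 : coeff 1 h = 1)
    (hmid : ∀ n, 1 < n → n < m → coeff n h = 0)
    (hmne : coeff m h ≠ 0) (t : K) :
    ∃! F : PowerSeries K,
      coeff 0 F = 0 ∧ coeff 1 F = 1 ∧
      (∀ n, 1 < n → n < m → coeff n F = 0) ∧
      coeff m F = t * coeff m h ∧
      PowerSeries.comp' F h = PowerSeries.comp' h F := by
  classical
  set F : PowerSeries K := PowerSeries.mk (RegIterAux.crec m h t) with hFdef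
  have hF0 : coeff 0 F = 0 := by rw [hFdef, coeff_mk, RegIterAux.crec_zero]
  have hF1 : coeff 1 F = 1 := by rw [hFdef, coeff_mk, RegIterAux.crec_one]
  have hFmid : ∀ n, 1 < n → n < m → coeff n F = 0 := fun n a b => by
    rw [hFdef, coeff_mk]; exact RegIterAux.crec_mid m h t n a b
  have hFm : coeff m F = t * coeff m h := by
    rw [hFdef, coeff_mk, RegIterAux.crec_m m hm h t]
  have hFcomm : PowerSeries.comp' F h = PowerSeries.comp' h F := by
    apply PowerSeries.ext
    intro N
    by_cases hN : N < 2 * m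
    · exact RegIterAux.low m hm F h hF0 hF1 hFmid h0 h1 hmid N hN
    · push_neg at hN
      set n := N - m + 1 with hndef
      have hmn : m < n := by omega
      have hNn : N = n + m - 1 := by omega
      have hcast : ((n : K) - (m : K)) * coeff m h ≠ 0 :=
        mul_ne_zero (sub_ne_zero.mpr (by exact_mod_cast (by omega : n ≠ m))) hmne
      have hrec := RegIterAux.crec_rec m n hm h t hmn hcast
      set G : PowerSeries K :=
        PowerSeries.mk fun j => if hj : j < n then RegIterAux.crec m h t j else 0 with hGdef
      have hG0 : coeff 0 G = 0 := by
        rw [hGdef, coeff_mk, dif_pos (by omega : (0:ℕ) < n), RegIterAux.crec_zero]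
      have hG1 : coeff 1 G = 1 := by
        rw [hGdef, coeff_mk, dif_pos (by omega : (1:ℕ) < n), RegIterAux.crec_one]
      have hGmid : ∀ j, 1 < j → j < m → coeff j G = 0 := fun j a b => by
        rw [hGdef, coeff_mk, dif_pos (by omega : j < n)]
        exact RegIterAux.crec_mid m h t j a b
      have hag : ∀ j, j < n → coeff j F = coeff j G := fun j hj => by
        rw [hFdef, hGdef, coeff_mk, coeff_mk, dif_pos hj]
      have hGn : coeff n G = 0 := by rw [hGdef, coeff_mk, dif_neg (lt_irrefl n)]
      have hFn : coeff n F = RegIterAux.crec m h t n := by rw [hFdef, coeff_mk]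
      have hd := RegIterAux.diff m n hm hmn F G h hF0 hF1 hFmid hG0 hG1 hGmid
        h0 h1 hmid hag
      rw [hGn, hFn] at hd
      rw [hNn]
      linear_combination hd + hrec
  refine ⟨F, ⟨hF0, hF1, hFmid, hFm, hFcomm⟩, ?_⟩
  intro G hG
  obtain ⟨hG0, hG1, hGmid, hGm, hGcomm⟩ := hG
  apply PowerSeries.ext
  intro N
  induction N using Nat.strong_induction_on with
  | _ N ih =>
    rcases Nat.lt_or_ge N m with hNm | hNm
    · rcases Nat.eq_zero_or_pos N with rfl | hpos
      · rw [hG0, hF0]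
      rcases Nat.eq_or_lt_of_le hpos with h2 | h2
      · rw [← h2, hG1, hF1]
      · rw [hGmid N h2 hNm, hFmid N h2 hNm]
    rcases Nat.eq_or_lt_of_le hNm with h2 | h2
    · rw [← h2, hGm, hFm]
    · have hd := RegIterAux.diff m N hm h2 G F h hG0 hG1 hGmid hF0 hF1 hFmid
        h0 h1 hmid (fun j hj => ih j hj)
      rw [hGcomm, hFcomm] at hd
      simp only [sub_self, sub_zero] at hd
      have hc0 : ((N : K) - (m : K)) * coeff m h ≠ 0 :=
        mul_ne_zero (sub_ne_zero.mpr (by exact_mod_cast (by omega : N ≠ m))) hmne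
      have hz : coeff N G - coeff N F = 0 :=
        (mul_eq_zero.mp hd.symm).resolve_left hc0
      exact sub_eq_zero.mp hz
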